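/- Let G be a simple connected graph with n nodes and m edges. The Kirchhoff index of the q-subdivision graph satisfies K(S_q(G)) = (2/q) K(G) + K̄(G) + (q/2) K̃(G) + (m²q² - n(n-1))/2. -/

import Mathlib

open Finset

variable {V : Type*}

/-- Normalized adjacency matrix `P = D^{-1/2} A D^{-1/2}`. -/
noncomputable def normAdj [Fintype V] (G : SimpleGraph V) [DecidableRel G.Adj] :
    Matrix V V ℝ :=
  Matrix.of fun i j =>
    if G.Adj i j then 1 / Real.sqrt ((G.degree i : ℝ) * (G.degree j : ℝ)) else 0

lemma normAdj_isHermitian [Fintype V] (G : SimpleGraph V) [DecidableRel G.Adj] :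
    (normAdj G).IsHermitian := by
  ext i j
  simp only [Matrix.conjTranspose_apply, normAdj, Matrix.of_apply, star_trivial]
  by_cases h : G.Adj i j
  · rw [if_pos h, if_pos ((G.adj_comm i j).mp h), mul_comm]
  · rw [if_neg h, if_neg (fun h' => h ((G.adj_comm j i).mp h'))]

/-- `μ` is an eigenvalue of `M`. -/
def IsEigenvalue {W : Type*} [Fintype W] (M : Matrix W W ℝ) (μ : ℝ) : Prop :=
  ∃ v : W → ℝ, v ≠ 0 ∧ M.mulVec v = μ • v

/-- Multiplicity of `μ` as an eigenvalue of `M` (dimension of the eigenspace). -/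
noncomputable def eigMult {W : Type*} [Fintype W] [DecidableEq W]
    (M : Matrix W W ℝ) (μ : ℝ) : ℕ :=
  Module.finrank ℝ (LinearMap.ker (Matrix.toLin' (M - μ • (1 : Matrix W W ℝ))))

/-- `r` is the effective-resistance function of `G`: `r i j = φ i - φ j` where
`L φ = e_i - e_j`. -/
def IsEffRes [Fintype V] [DecidableEq V] (G : SimpleGraph V) [DecidableRel G.Adj]
    (r : V → V → ℝ) : Prop :=
  ∀ i j : V, ∃ φ : V → ℝ,
    (G.lapMatrix ℝ).mulVec φ =
      (fun k => (if k = i then (1 : ℝ) else 0) - (if k = j then (1 : ℝ) else 0)) ∧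
    r i j = φ i - φ j

/-- `T` is the expected-hitting-time function of the simple random walk on `G`. -/
def IsHitting [Fintype V] (G : SimpleGraph V) [DecidableRel G.Adj] (T : V → V → ℝ) : Prop :=
  (∀ j, T j j = 0) ∧
  ∀ i j : V, i ≠ j → T i j = 1 + (∑ k ∈ G.neighborFinset i, T k j) / (G.degree i : ℝ)

/-- Kemeny constant `∑_{λ eigenvalue ≠ 1} 1/(1-λ)` of the random walk on `G`. -/
noncomputable def kemeny [Fintype V] [DecidableEq V] (G : SimpleGraph V) [DecidableRel G.Adj]
    (hP : (normAdj G).IsHermitian) : ℝ :=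
  ∑ i, if hP.eigenvalues i = 1 then 0 else 1 / (1 - hP.eigenvalues i)

/-- Kirchhoff index. -/
noncomputable def kirchhoff [Fintype V] (r : V → V → ℝ) : ℝ :=
  (∑ i, ∑ j, r i j) / 2

/-- Additive degree-Kirchhoff index. -/
noncomputable def addKirchhoff [Fintype V] (G : SimpleGraph V) [DecidableRel G.Adj]
    (r : V → V → ℝ) : ℝ :=
  (∑ i, ∑ j, ((G.degree i : ℝ) + (G.degree j : ℝ)) * r i j) / 2

/-- Multiplicative degree-Kirchhoff index. -/
noncomputable def mulKirchhoff [Fintype V] (G : SimpleGraph V) [DecidableRel G.Adj]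
    (r : V → V → ℝ) : ℝ :=
  (∑ i, ∑ j, (G.degree i : ℝ) * (G.degree j : ℝ) * r i j) / 2

/-- The adjacency relation of the q-subdivision graph. -/
def qSubAdj (G : SimpleGraph V) (q : ℕ) :
    (V ⊕ (G.edgeSet × Fin q)) → (V ⊕ (G.edgeSet × Fin q)) → Prop
  | Sum.inl u, Sum.inr p => u ∈ (p.1 : Sym2 V)
  | Sum.inr p, Sum.inl u => u ∈ (p.1 : Sym2 V)
  | _, _ => False

/-- The q-subdivision graph `S_q(G)`: every edge `uv` of `G` is replaced by `q`
disjoint paths of length 2. -/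
def qSubdivision (G : SimpleGraph V) (q : ℕ) :
    SimpleGraph (V ⊕ (G.edgeSet × Fin q)) where
  Adj := qSubAdj G q
  symm := by
    constructor
    intro a b h
    cases a <;> cases b <;> simp_all [qSubAdj]
  loopless := by
    constructor
    intro a h
    cases a <;> simp_all [qSubAdj]

noncomputable instance (G : SimpleGraph V) (q : ℕ) :
    DecidableRel (qSubdivision G q).Adj := Classical.decRel _

noncomputable instance [Fintype V] (G : SimpleGraph V) : Fintype G.edgeSet :=
  Fintype.ofFinite _

set_option linter.unusedSectionVars false
set_option maxHeartbeats 1000000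

open Matrix Sum

section generic
variable {W : Type*} [Fintype W] [DecidableEq W]

def dlt (i j : W) : W → ℝ := fun k => (if k = i then (1 : ℝ) else 0) - (if k = j then (1 : ℝ) else 0)

lemma symm_dot (M : Matrix W W ℝ) (hM : ∀ i j, M i j = M j i) (x y : W → ℝ) :
    x ⬝ᵥ (M *ᵥ y) = y ⬝ᵥ (M *ᵥ x) := by
  simp only [dotProduct, Matrix.mulVec, dotProduct, Finset.mul_sum]
  rw [Finset.sum_comm]
  refine Finset.sum_congr rfl fun i _ => Finset.sum_congr rfl fun j _ => ?_
  rw [hM j i]; ring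

lemma dot_dlt (x : W → ℝ) (i j : W) : x ⬝ᵥ dlt i j = x i - x j := by
  simp [dlt, dotProduct, mul_sub, Finset.sum_sub_distrib, mul_ite, Finset.sum_ite_eq']

variable (H : SimpleGraph W) [DecidableRel H.Adj]

lemma ker_const (hconn : H.Connected) {f : W → ℝ} (h : H.lapMatrix ℝ *ᵥ f = 0) (p p' : W) :
    f p = f p' := by
  have := (H.lapMatrix_mulVec_eq_zero_iff_forall_reachable).mp h
  exact this p p' (hconn.preconnected p p')

variable {H} {r : W → W → ℝ}

lemma effres_eq (hconn : H.Connected) (hr : IsEffRes H r) {i j : W} {φ : W → ℝ}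
    (hφ : H.lapMatrix ℝ *ᵥ φ = dlt i j) : r i j = φ i - φ j := by
  obtain ⟨ψ, hψ, hval⟩ := hr i j
  have h0 : H.lapMatrix ℝ *ᵥ (φ - ψ) = 0 := by
    rw [Matrix.mulVec_sub, hφ, hψ]; funext k; simp only [dlt, Pi.zero_apply, Pi.sub_apply]; ring
  have := ker_const H hconn h0 i j
  simp only [Pi.sub_apply] at this
  rw [hval]; linarith

lemma effres_diag (hr : IsEffRes H r) (i : W) : r i i = 0 := by
  obtain ⟨ψ, _, hval⟩ := hr i i; rw [hval]; ring

lemma effres_symm (hconn : H.Connected) (hr : IsEffRes H r) (i j : W) : r i j = r j i := by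
  obtain ⟨ψ, hψ, hval⟩ := hr i j
  have : H.lapMatrix ℝ *ᵥ (-ψ) = dlt j i := by
    rw [Matrix.mulVec_neg, hψ]; funext k; simp only [dlt, Pi.neg_apply, Pi.sub_apply]; ring
  rw [effres_eq hconn hr this, hval]; simp only [Pi.neg_apply]; ring

lemma reciprocity {i j k l : W} {φ ψ : W → ℝ} (hφ : H.lapMatrix ℝ *ᵥ φ = dlt i j)
    (hψ : H.lapMatrix ℝ *ᵥ ψ = dlt k l) : ψ i - ψ j = φ k - φ l := by
  have h1 : ψ ⬝ᵥ (H.lapMatrix ℝ *ᵥ φ) = φ ⬝ᵥ (H.lapMatrix ℝ *ᵥ ψ) :=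
    symm_dot _ (fun a b => congrFun (congrFun (H.isSymm_lapMatrix (R := ℝ)) b) a) _ _
  rw [hφ, hψ, dot_dlt, dot_dlt] at h1
  linarith

lemma keylem (hconn : H.Connected) (hr : IsEffRes H r) {i j : W} {φ : W → ℝ}
    (hφ : H.lapMatrix ℝ *ᵥ φ = dlt i j) (k l : W) :
    φ k - φ l = (r i l + r j k - r i k - r j l) / 2 := by
  obtain ⟨fik, hik, rik⟩ := hr i k
  obtain ⟨fil, hil, ril⟩ := hr i l
  obtain ⟨fjk, hjk, rjk⟩ := hr j k
  obtain ⟨fjl, hjl, rjl⟩ := hr j l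
  -- A := fil - fjl, B := fik - fjk, P := fil - fik
  have hAB : H.lapMatrix ℝ *ᵥ ((fil - fjl) - (fik - fjk)) = 0 := by
    simp only [Matrix.mulVec_sub, hil, hjl, hik, hjk]; funext p; simp only [dlt, Pi.zero_apply, Pi.sub_apply]; ring
  have hB : H.lapMatrix ℝ *ᵥ ((fik - fjk) - φ) = 0 := by
    simp only [Matrix.mulVec_sub, hik, hjk, hφ]; funext p; simp only [dlt, Pi.zero_apply, Pi.sub_apply]; ring
  have hP : H.lapMatrix ℝ *ᵥ (fil - fik) = dlt k l := by
    simp only [Matrix.mulVec_sub, hil, hik]; funext p; simp only [dlt, Pi.zero_apply, Pi.sub_apply]; ring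
  have kAB := ker_const H hconn hAB j l
  have kB := ker_const H hconn hB k l
  have recP := reciprocity hφ hP
  simp only [Pi.sub_apply] at kAB kB recP
  rw [rik, ril, rjk, rjl]; linarith


end generic

section edges
variable [Fintype V] [DecidableEq V] (G : SimpleGraph V) [DecidableRel G.Adj]

/-- indicator that vertex i is an endpoint of edge e -/
def ii (e : G.edgeSet) (i : V) : ℝ := if i ∈ (e : Sym2 V) then 1 else 0

lemma edge_repr (e : G.edgeSet) : ∃ a b : V, G.Adj a b ∧ (e : Sym2 V) = s(a, b) := by
  obtain ⟨⟨a, b⟩, h⟩ := Quot.exists_rep (e : Sym2 V)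
  have he : (e : Sym2 V) = s(a, b) := h.symm
  exact ⟨a, b, G.mem_edgeSet.mp (he ▸ e.2), he⟩

lemma ii_apply {e : G.edgeSet} {a b : V} (hab : a ≠ b) (he : (e : Sym2 V) = s(a, b)) (k : V) :
    ii G e k = (if k = a then (1:ℝ) else 0) + (if k = b then (1:ℝ) else 0) := by
  simp only [ii, he, Sym2.mem_iff]
  by_cases h1 : k = a <;> by_cases h2 : k = b <;> simp_all

lemma F3 {e : G.edgeSet} {a b : V} (hab : a ≠ b) (he : (e : Sym2 V) = s(a, b)) (x : V → ℝ) :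
    ∑ i, ii G e i * x i = x a + x b := by
  simp only [ii_apply G hab he, add_mul, ite_mul, one_mul, zero_mul,
    Finset.sum_add_distrib, Finset.sum_ite_eq', Finset.mem_univ, if_pos]

lemma sum_edges_incident {M : Type*} [AddCommMonoid M] (k : V) (F : Sym2 V → M) :
    ∑ e : G.edgeSet, (if k ∈ (e : Sym2 V) then F (e : Sym2 V) else 0)
      = ∑ j ∈ G.neighborFinset k, F s(k, j) := by
  rw [← Finset.sum_filter]
  refine Finset.sum_bij'
    (i := fun e he => Sym2.Mem.other' ((Finset.mem_filter.mp he).2))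
    (j := fun jv hj => (⟨s(k, jv), G.mem_edgeSet.mpr ((G.mem_neighborFinset k jv).mp hj)⟩ :
      G.edgeSet))
    (hi := fun e he => ?_) (hj := fun jv hj => ?_) (left_neg := fun e he => ?_)
    (right_neg := fun jv hj => ?_) (h := fun e he => ?_)
  · have h := (Finset.mem_filter.mp he).2
    rw [G.mem_neighborFinset]
    exact G.mem_edgeSet.mp (by rw [Sym2.other_spec' h]; exact e.2)
  · exact Finset.mem_filter.mpr ⟨Finset.mem_univ _, Sym2.mem_mk_left k jv⟩
  · exact Subtype.ext (Sym2.other_spec' _)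
  · exact Sym2.congr_right.mp (Sym2.other_spec' _)
  · have h := (Finset.mem_filter.mp he).2
    exact congrArg F (Sym2.other_spec' h).symm

lemma F1 (k : V) : ∑ e : G.edgeSet, ii G e k = (G.degree k : ℝ) := by
  have := sum_edges_incident G (M := ℝ) k (fun _ => 1)
  simp only [ii]
  rw [this, Finset.sum_const, nsmul_eq_mul, mul_one, SimpleGraph.degree]

lemma F2 (k j : V) : ∑ e : G.edgeSet, ii G e k * ii G e j =
    if k = j then (G.degree k : ℝ) else (if G.Adj k j then 1 else 0) := by
  have h1 : ∀ e : G.edgeSet, ii G e k * ii G e j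
      = (if k ∈ (e : Sym2 V) then (if j ∈ (e : Sym2 V) then (1:ℝ) else 0) else 0) := by
    intro e; simp only [ii]; by_cases h : k ∈ (e : Sym2 V) <;> simp [h]
  simp only [h1]
  rw [sum_edges_incident G (M := ℝ) k (fun s => if j ∈ s then 1 else 0)]
  by_cases hkj : k = j
  · subst hkj
    simp only [Sym2.mem_iff, if_pos, eq_self_iff_true, true_or, if_true]
    rw [Finset.sum_const, nsmul_eq_mul, mul_one, SimpleGraph.degree]
  · rw [if_neg hkj]
    have : ∀ j' ∈ G.neighborFinset k, (if j ∈ s(k, j') then (1:ℝ) else 0)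
        = (if j' = j then 1 else 0) := by
      intro j' _
      simp only [Sym2.mem_iff]
      by_cases h : j' = j
      · subst h; simp [Ne.symm hkj]
      · simp only [if_neg h]
        rw [if_neg]
        rintro (h'|h')
        · exact hkj h'.symm
        · exact h h'.symm
    rw [Finset.sum_congr rfl this, Finset.sum_ite_eq']
    simp only [SimpleGraph.mem_neighborFinset]
end edges


section sub
variable [Fintype V] [DecidableEq V] (G : SimpleGraph V) [DecidableRel G.Adj] (q : ℕ)

lemma qsub_adj_inl_inr (u : V) (p : G.edgeSet × Fin q) :
    (qSubdivision G q).Adj (inl u) (inr p) ↔ u ∈ (p.1 : Sym2 V) := Iff.rfl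

lemma qsub_adj_inr_inl (u : V) (p : G.edgeSet × Fin q) :
    (qSubdivision G q).Adj (inr p) (inl u) ↔ u ∈ (p.1 : Sym2 V) := Iff.rfl

lemma qsub_adj_inl_inl (u v : V) : ¬ (qSubdivision G q).Adj (inl u) (inl v) := fun h => h

lemma qsub_adj_inr_inr (p p' : G.edgeSet × Fin q) :
    ¬ (qSubdivision G q).Adj (inr p) (inr p') := fun h => h

lemma nbhd_inl (k : V) : (qSubdivision G q).neighborFinset (inl k) =
    Finset.map ⟨Sum.inr, Sum.inr_injective⟩
      (Finset.univ.filter fun p : G.edgeSet × Fin q => k ∈ (p.1 : Sym2 V)) := by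
  ext y
  cases y with
  | inl v => simp [SimpleGraph.mem_neighborFinset, qsub_adj_inl_inl]
  | inr p => simp [SimpleGraph.mem_neighborFinset, qsub_adj_inl_inr]

lemma nbhd_inr {e : G.edgeSet} {a b : V} (hab : G.Adj a b) (he : (e : Sym2 V) = s(a, b))
    (t : Fin q) : (qSubdivision G q).neighborFinset (inr (e, t)) = {inl a, inl b} := by
  ext y
  cases y with
  | inl v =>
    simp [SimpleGraph.mem_neighborFinset, qsub_adj_inr_inl, he, Sym2.mem_iff]
  | inr p => simp [SimpleGraph.mem_neighborFinset, qsub_adj_inr_inr]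

lemma sum_nbhd_inl (ψ : (V ⊕ (G.edgeSet × Fin q)) → ℝ) (k : V) :
    ∑ y ∈ (qSubdivision G q).neighborFinset (inl k), ψ y
      = ∑ p : G.edgeSet × Fin q, (if k ∈ (p.1 : Sym2 V) then ψ (inr p) else 0) := by
  rw [nbhd_inl, Finset.sum_map, Finset.sum_filter]
  rfl

lemma deg_inl (k : V) : ((qSubdivision G q).degree (inl k) : ℝ) = (q : ℝ) * (G.degree k : ℝ) := by
  have h1 : ((qSubdivision G q).degree (inl k) : ℝ)
      = ∑ y ∈ (qSubdivision G q).neighborFinset (inl k), (1 : ℝ) := by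
    rw [Finset.sum_const, nsmul_eq_mul, mul_one, SimpleGraph.degree]
  rw [h1, sum_nbhd_inl, Fintype.sum_prod_type]
  have h2 : ∀ e : G.edgeSet, ∑ _t : Fin q, (if k ∈ (e : Sym2 V) then (1:ℝ) else 0)
      = (q : ℝ) * ii G e k := by
    intro e
    rw [Finset.sum_const, nsmul_eq_mul, Finset.card_univ, Fintype.card_fin, ii]
  rw [Finset.sum_congr rfl fun e _ => h2 e, ← Finset.mul_sum, F1]

lemma deg_inr {e : G.edgeSet} {a b : V} (hab : G.Adj a b) (he : (e : Sym2 V) = s(a, b))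
    (t : Fin q) : ((qSubdivision G q).degree (inr (e, t)) : ℝ) = 2 := by
  rw [SimpleGraph.degree, nbhd_inr G q hab he]
  rw [Finset.card_insert_of_notMem (by simp [hab.ne]), Finset.card_singleton]
  norm_num

lemma lap_row_inl (x : V → ℝ) (g : G.edgeSet × Fin q → ℝ) (k : V) :
    ((qSubdivision G q).lapMatrix ℝ *ᵥ Sum.elim x g) (inl k)
      = (q : ℝ) * (G.degree k : ℝ) * x k
        - ∑ p : G.edgeSet × Fin q, (if k ∈ (p.1 : Sym2 V) then g p else 0) := by
  rw [SimpleGraph.lapMatrix_mulVec_apply, deg_inl, sum_nbhd_inl]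
  rfl

lemma lap_row_inr (x : V → ℝ) (g : G.edgeSet × Fin q → ℝ) {e : G.edgeSet} {a b : V}
    (hab : G.Adj a b) (he : (e : Sym2 V) = s(a, b)) (t : Fin q) :
    ((qSubdivision G q).lapMatrix ℝ *ᵥ Sum.elim x g) (inr (e, t))
      = 2 * g (e, t) - (x a + x b) := by
  rw [SimpleGraph.lapMatrix_mulVec_apply, deg_inr G q hab he, nbhd_inr G q hab he]
  rw [Finset.sum_pair (by simp [hab.ne])]
  rfl

end sub

section sub2
variable [Fintype V] [DecidableEq V] (G : SimpleGraph V) [DecidableRel G.Adj] (q : ℕ)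

lemma qsub_connected (hconn : G.Connected) (hq : 0 < q) : (qSubdivision G q).Connected := by
  have hne : Nonempty V := hconn.nonempty
  have t0 : Fin q := ⟨0, hq⟩
  have step : ∀ u v : V, G.Adj u v →
      (qSubdivision G q).Reachable (inl u) (inl v) := by
    intro u v huv
    have h1 : (qSubdivision G q).Adj (inl u)
        (inr (⟨s(u, v), G.mem_edgeSet.mpr huv⟩, t0)) := Sym2.mem_mk_left u v
    have h2 : (qSubdivision G q).Adj (inr (⟨s(u, v), G.mem_edgeSet.mpr huv⟩, t0))
        (inl v) := Sym2.mem_mk_right u v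
    exact h1.reachable.trans h2.reachable
  have key : ∀ u v : V, (qSubdivision G q).Reachable (inl u) (inl v) := by
    intro u v
    obtain ⟨w⟩ := hconn.preconnected u v
    induction w with
    | nil => exact SimpleGraph.Reachable.refl _
    | cons h p ih => exact (step _ _ h).trans ih
  have toinl : ∀ z : V ⊕ (G.edgeSet × Fin q), ∃ u : V,
      (qSubdivision G q).Reachable z (inl u) := by
    intro z
    cases z with
    | inl u => exact ⟨u, SimpleGraph.Reachable.refl _⟩
    | inr p =>
      obtain ⟨a, b, hab, he⟩ := edge_repr G p.1
      refine ⟨a, SimpleGraph.Adj.reachable ?_⟩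
      show a ∈ (p.1 : Sym2 V)
      rw [he]; exact Sym2.mem_mk_left a b
  haveI : Nonempty (V ⊕ (G.edgeSet × Fin q)) := ⟨inl hne.some⟩
  refine ⟨fun z z' => ?_⟩
  obtain ⟨u, hu⟩ := toinl z
  obtain ⟨u', hu'⟩ := toinl z'
  exact (hu.trans (key u u')).trans hu'.symm

/-- main building block: extend `x` on `V` by edge-midpoint averages -/
noncomputable def phiA (x : V → ℝ) : (V ⊕ (G.edgeSet × Fin q)) → ℝ :=
  Sum.elim x (fun p => (∑ i, ii G p.1 i * x i) / 2)

/-- indicator of a single subdivision vertex -/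
def phiB (w0 : G.edgeSet × Fin q) : (V ⊕ (G.edgeSet × Fin q)) → ℝ :=
  fun z => if z = inr w0 then 1 else 0

lemma lap_phiA (x : V → ℝ) (z : V ⊕ (G.edgeSet × Fin q)) :
    ((qSubdivision G q).lapMatrix ℝ *ᵥ phiA G q x) z
      = Sum.elim (fun k => (q : ℝ) / 2 * ((G.lapMatrix ℝ *ᵥ x) k)) (fun _ => (0 : ℝ)) z := by
  cases z with
  | inl k =>
    rw [show phiA G q x = Sum.elim x (fun p => (∑ i, ii G p.1 i * x i) / 2) from rfl,
      lap_row_inl, Sum.elim_inl]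
    have h1 : ∑ p : G.edgeSet × Fin q, (if k ∈ (p.1 : Sym2 V)
        then (∑ i, ii G p.1 i * x i) / 2 else 0)
        = (q : ℝ) / 2 * ∑ e : G.edgeSet, ∑ i, ii G e k * ii G e i * x i := by
      rw [Fintype.sum_prod_type, Finset.mul_sum]
      refine Finset.sum_congr rfl fun e _ => ?_
      show (∑ _t : Fin q, if k ∈ (e : Sym2 V) then (∑ i, ii G e i * x i) / 2 else 0) = _
      rw [Finset.sum_const, Finset.card_univ, Fintype.card_fin, nsmul_eq_mul]
      have : (if k ∈ (e : Sym2 V) then (∑ i, ii G e i * x i) / 2 else 0)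
          = ii G e k * (∑ i, ii G e i * x i) / 2 := by
        rw [ii]; split_ifs <;> ring
      rw [this, Finset.mul_sum]
      ring_nf
    rw [h1, Finset.sum_comm]
    have h2 : ∀ i, ∑ e : G.edgeSet, ii G e k * ii G e i * x i
        = (if k = i then (G.degree k : ℝ) else if G.Adj k i then 1 else 0) * x i := by
      intro i
      rw [← Finset.sum_mul, F2]
    rw [Finset.sum_congr rfl fun i _ => h2 i]
    have h3 : ∑ i, (if k = i then (G.degree k : ℝ) else if G.Adj k i then 1 else 0) * x i
        = (G.degree k : ℝ) * x k + ∑ i, (if G.Adj k i then x i else 0) := by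
      have : ∀ i, (if k = i then (G.degree k : ℝ) else if G.Adj k i then 1 else 0) * x i
          = (if k = i then (G.degree k : ℝ) * x i - (if G.Adj k i then x i else 0) else 0)
            + (if G.Adj k i then x i else 0) := by
        intro i
        by_cases h : k = i <;> simp [h] <;> split_ifs <;> ring
      rw [Finset.sum_congr rfl fun i _ => this i, Finset.sum_add_distrib, Finset.sum_ite_eq]
      simp only [Finset.mem_univ, if_pos]
      have hkk : ¬ G.Adj k k := G.irrefl
      rw [if_neg hkk]
      ring
    rw [h3]
    show _ = (q : ℝ) / 2 * ((G.lapMatrix ℝ *ᵥ x) k)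
    rw [SimpleGraph.lapMatrix_mulVec_apply]
    have h4 : ∑ u ∈ G.neighborFinset k, x u = ∑ i, (if G.Adj k i then x i else 0) := by
      rw [SimpleGraph.neighborFinset_eq_filter, Finset.sum_filter]
    rw [h4]
    ring
  | inr p =>
    obtain ⟨a, b, hab, he⟩ := edge_repr G p.1
    have hp : p = (p.1, p.2) := rfl
    rw [hp, show phiA G q x = Sum.elim x (fun p => (∑ i, ii G p.1 i * x i) / 2) from rfl,
      lap_row_inr G q _ _ hab he, Sum.elim_inr]
    rw [F3 G hab.ne he]
    ring

lemma lap_phiB (w0 : G.edgeSet × Fin q) (z : V ⊕ (G.edgeSet × Fin q)) :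
    ((qSubdivision G q).lapMatrix ℝ *ᵥ phiB G q w0) z
      = Sum.elim (fun k => -(ii G w0.1 k))
          (fun w => 2 * (if w = w0 then (1 : ℝ) else 0)) z := by
  have hB : phiB G q w0 = Sum.elim (fun _ : V => (0:ℝ)) (fun p => if p = w0 then 1 else 0) := by
    funext y
    cases y with
    | inl u => simp [phiB]
    | inr p => simp [phiB, Sum.inr.injEq]
  cases z with
  | inl k =>
    rw [hB, lap_row_inl, Sum.elim_inl]
    have h1 : ∑ p : G.edgeSet × Fin q, (if k ∈ (p.1 : Sym2 V)
        then (if p = w0 then (1:ℝ) else 0) else 0)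
        = ii G w0.1 k := by
      have : ∀ p : G.edgeSet × Fin q, (if k ∈ (p.1 : Sym2 V)
          then (if p = w0 then (1:ℝ) else 0) else 0)
          = (if p = w0 then (if k ∈ (p.1 : Sym2 V) then (1:ℝ) else 0) else 0) := by
        intro p
        by_cases h : k ∈ (p.1 : Sym2 V) <;> by_cases h2 : p = w0 <;> simp [h, h2]
      rw [Finset.sum_congr rfl fun p _ => this p, Finset.sum_ite_eq']
      simp [ii]
    rw [h1]
    ring
  | inr p =>
    obtain ⟨a, b, hab, he⟩ := edge_repr G p.1
    have hp : p = (p.1, p.2) := rfl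
    rw [hp, hB, lap_row_inr G q _ _ hab he, Sum.elim_inr]
    ring

end sub2

section rformulas
variable [Fintype V] [DecidableEq V] {G : SimpleGraph V} [DecidableRel G.Adj] {q : ℕ}
variable {r : V → V → ℝ} {r' : (V ⊕ (G.edgeSet × Fin q)) → (V ⊕ (G.edgeSet × Fin q)) → ℝ}

lemma R1 (hconn : G.Connected) (hq : 0 < q) (hr : IsEffRes G r)
    (hr' : IsEffRes (qSubdivision G q) r') (u v : V) :
    r' (inl u) (inl v) = 2 / (q : ℝ) * r u v := by
  have hq0 : (q : ℝ) ≠ 0 := Nat.cast_ne_zero.mpr hq.ne'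
  obtain ⟨φ, hφ, hval⟩ := hr u v
  set x : V → ℝ := fun k => 2 / (q : ℝ) * φ k with hx
  have hLx : ∀ k, (G.lapMatrix ℝ *ᵥ x) k = 2 / (q : ℝ) * ((G.lapMatrix ℝ *ᵥ φ) k) := by
    intro k
    have : x = (2 / (q : ℝ)) • φ := rfl
    rw [this, Matrix.mulVec_smul]
    rfl
  have key : (qSubdivision G q).lapMatrix ℝ *ᵥ phiA G q x
      = dlt (inl u) (inl v) := by
    funext z
    rw [lap_phiA]
    cases z with
    | inl k =>
      rw [Sum.elim_inl, hLx, hφ]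
      simp only [dlt, Sum.inl.injEq, reduceCtorEq, if_false]
      field_simp
    | inr p =>
      rw [Sum.elim_inr]
      simp only [dlt, reduceCtorEq, if_false]
      ring
  have := effres_eq (qsub_connected G q hconn hq) hr' key
  rw [this]
  show x u - x v = _
  rw [hval]; ring


lemma R2 (hconn : G.Connected) (hq : 0 < q) (hr : IsEffRes G r)
    (hr' : IsEffRes (qSubdivision G q) r') (u : V) (f : G.edgeSet) (st : Fin q) :
    r' (inl u) (inr (f, st)) = 1 / 2 + (∑ i, ii G f i * r u i) / (q : ℝ)
      - (∑ i, ∑ j, ii G f i * ii G f j * r i j) / (4 * (q : ℝ)) := by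
  have hq0 : (q : ℝ) ≠ 0 := Nat.cast_ne_zero.mpr hq.ne'
  obtain ⟨c, d, hcd, hf⟩ := edge_repr G f
  obtain ⟨φ1, hφ1, hval1⟩ := hr u c
  obtain ⟨φ2, hφ2, hval2⟩ := hr u d
  set x : V → ℝ := fun k => (φ1 k + φ2 k) / (q : ℝ) with hx
  have hLx : ∀ k, (G.lapMatrix ℝ *ᵥ x) k
      = ((G.lapMatrix ℝ *ᵥ φ1) k + (G.lapMatrix ℝ *ᵥ φ2) k) / (q : ℝ) := by
    intro k
    have h : x = ((q : ℝ)⁻¹) • (φ1 + φ2) := by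
      funext k; simp [hx, div_eq_inv_mul]; try ring
    rw [h, Matrix.mulVec_smul, Matrix.mulVec_add]
    simp [div_eq_inv_mul]
  set φ' : (V ⊕ (G.edgeSet × Fin q)) → ℝ :=
    fun z => phiA G q x z - (1 / 2) * phiB G q (f, st) z with hφ'
  have key : (qSubdivision G q).lapMatrix ℝ *ᵥ φ' = dlt (inl u) (inr (f, st)) := by
    have hsplit : φ' = phiA G q x - (1 / 2 : ℝ) • phiB G q (f, st) := by
      funext z; simp [hφ']
    rw [hsplit, Matrix.mulVec_sub, Matrix.mulVec_smul]
    funext z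
    simp only [Pi.sub_apply, Pi.smul_apply, smul_eq_mul]
    rw [lap_phiA, lap_phiB]
    cases z with
    | inl k =>
      simp only [Sum.elim_inl]
      rw [hLx, hφ1, hφ2, ii_apply G hcd.ne hf]
      simp only [dlt, Sum.inl.injEq, reduceCtorEq, if_false]
      field_simp
      split_ifs <;> first
        | ring
        | (exfalso; subst_vars; exact G.loopless _ hcd)
    | inr p =>
      simp only [Sum.elim_inr]
      simp only [dlt, reduceCtorEq, if_false, Sum.inr.injEq]
      by_cases hp : p = (f, st) <;> simp [hp] <;> try ring
  have hr'val := effres_eq (qsub_connected G q hconn hq) hr' key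
  rw [hr'val]
  have hφ'u : φ' (inl u) = x u := by simp [hφ', phiA, phiB]
  have hφ'w : φ' (inr (f, st)) = (x c + x d) / 2 - 1 / 2 := by
    simp only [hφ', phiA, phiB, Sum.elim_inr, if_pos rfl]
    rw [F3 G hcd.ne hf]
    simp only [if_true]
    ring
  rw [hφ'u, hφ'w]
  -- now express in terms of r
  have hsum1 : ∑ i, ii G f i * r u i = r u c + r u d := F3 G hcd.ne hf _
  have hsum2 : ∑ i, ∑ j, ii G f i * ii G f j * r i j = (r c c + r c d) + (r d c + r d d) := by
    have hinner : ∀ i, ∑ j, ii G f i * ii G f j * r i j = ii G f i * (r i c + r i d) := by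
      intro i
      rw [← F3 G hcd.ne hf (fun j => r i j), Finset.mul_sum]
      exact Finset.sum_congr rfl fun j _ => by ring
    rw [Finset.sum_congr rfl fun i _ => hinner i]
    exact F3 G hcd.ne hf _
  rw [hsum1, hsum2]
  have k1 : φ1 u - φ1 c = r u c := hval1.symm
  have k2 : φ2 u - φ2 d = r u d := hval2.symm
  have k3 : φ1 u - φ1 d = (r u d + r c u - r c d) / 2 := by
    have := keylem hconn hr hφ1 u d
    rw [effres_diag hr u] at this
    linarith
  have k4 : φ2 u - φ2 c = (r u c + r d u - r d c) / 2 := by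
    have := keylem hconn hr hφ2 u c
    rw [effres_diag hr u] at this
    linarith
  have s1 : r c u = r u c := (effres_symm hconn hr u c).symm
  have s2 : r d u = r u d := (effres_symm hconn hr u d).symm
  have s3 : r d c = r c d := (effres_symm hconn hr c d).symm
  have s4 : r c c = 0 := effres_diag hr c
  have s5 : r d d = 0 := effres_diag hr d
  have hBv : x u - (x c + x d) / 2 = (r u c + r u d - r c d / 2) / (q : ℝ) := by
    have e1 : x u = (φ1 u + φ2 u) / (q : ℝ) := rfl
    have e2 : x c = (φ1 c + φ2 c) / (q : ℝ) := rfl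
    have e3 : x d = (φ1 d + φ2 d) / (q : ℝ) := rfl
    rw [e1, e2, e3]
    have hsum : 2 * (φ1 u + φ2 u) - (φ1 c + φ2 c + φ1 d + φ2 d)
        = 2 * r u c + 2 * r u d - r c d := by linarith [k1, k2, k3, k4, s1, s2, s3]
    have expand : (φ1 u + φ2 u) / (q : ℝ)
        - ((φ1 c + φ2 c) / (q : ℝ) + (φ1 d + φ2 d) / (q : ℝ)) / 2
        = (2 * (φ1 u + φ2 u) - (φ1 c + φ2 c + φ1 d + φ2 d)) / (2 * (q : ℝ)) := by
      field_simp
      ring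
    rw [expand, hsum]
    field_simp
  rw [s3, s4, s5]
  have hre : x u - ((x c + x d) / 2 - 1 / 2) = (x u - (x c + x d) / 2) + 1 / 2 := by ring
  rw [hre, hBv]
  field_simp
  ring


lemma R3 (hconn : G.Connected) (hq : 0 < q) (hr : IsEffRes G r)
    (hr' : IsEffRes (qSubdivision G q) r') (e f : G.edgeSet) (t st : Fin q)
    (hw : (e, t) ≠ (f, st)) :
    r' (inr (e, t)) (inr (f, st))
      = 1 + (∑ i, ∑ j, ii G e i * ii G f j * r i j) / (2 * (q : ℝ))
        - (∑ i, ∑ j, ii G e i * ii G e j * r i j) / (4 * (q : ℝ))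
        - (∑ i, ∑ j, ii G f i * ii G f j * r i j) / (4 * (q : ℝ)) := by
  have hq0 : (q : ℝ) ≠ 0 := Nat.cast_ne_zero.mpr hq.ne'
  obtain ⟨a, b, hab, he⟩ := edge_repr G e
  obtain ⟨c, d, hcd, hf⟩ := edge_repr G f
  obtain ⟨φ1, hφ1, hval1⟩ := hr a c
  obtain ⟨φ2, hφ2, hval2⟩ := hr a d
  obtain ⟨φ3, hφ3, hval3⟩ := hr b c
  obtain ⟨φ4, hφ4, hval4⟩ := hr b d
  set x : V → ℝ := fun k => (φ1 k + φ2 k + φ3 k + φ4 k) / (2 * (q : ℝ)) with hx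
  have hLx : ∀ k, (G.lapMatrix ℝ *ᵥ x) k
      = ((G.lapMatrix ℝ *ᵥ φ1) k + (G.lapMatrix ℝ *ᵥ φ2) k
        + (G.lapMatrix ℝ *ᵥ φ3) k + (G.lapMatrix ℝ *ᵥ φ4) k) / (2 * (q : ℝ)) := by
    intro k
    have h : x = ((2 * (q : ℝ))⁻¹) • (φ1 + φ2 + φ3 + φ4) := by
      funext k; simp [hx, div_eq_inv_mul]
    rw [h, Matrix.mulVec_smul, Matrix.mulVec_add, Matrix.mulVec_add, Matrix.mulVec_add]
    simp [div_eq_inv_mul]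
  set φ' : (V ⊕ (G.edgeSet × Fin q)) → ℝ :=
    fun z => phiA G q x z + (1 / 2) * phiB G q (e, t) z - (1 / 2) * phiB G q (f, st) z with hφ'
  have key : (qSubdivision G q).lapMatrix ℝ *ᵥ φ' = dlt (inr (e, t)) (inr (f, st)) := by
    have hsplit : φ' = phiA G q x + (1 / 2 : ℝ) • phiB G q (e, t)
        - (1 / 2 : ℝ) • phiB G q (f, st) := by
      funext z; simp only [hφ', Pi.sub_apply, Pi.add_apply, Pi.smul_apply, smul_eq_mul]
    rw [hsplit, Matrix.mulVec_sub, Matrix.mulVec_add, Matrix.mulVec_smul, Matrix.mulVec_smul]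
    funext z
    simp only [Pi.sub_apply, Pi.add_apply, Pi.smul_apply, smul_eq_mul]
    rw [lap_phiA, lap_phiB, lap_phiB]
    cases z with
    | inl k =>
      simp only [Sum.elim_inl]
      rw [hLx, hφ1, hφ2, hφ3, hφ4, ii_apply G hab.ne he, ii_apply G hcd.ne hf]
      simp only [dlt, reduceCtorEq, if_false]
      field_simp
      split_ifs <;> first
        | ring
        | (exfalso; subst_vars; first
            | exact G.loopless _ hab
            | exact G.loopless _ hcd)
    | inr p =>
      simp only [Sum.elim_inr]
      simp only [dlt, Sum.inr.injEq, reduceCtorEq, if_false]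
      by_cases hp1 : p = (e, t) <;> by_cases hp2 : p = (f, st) <;>
        simp [hp1, hp2, hw] <;> try ring
  have hr'val := effres_eq (qsub_connected G q hconn hq) hr' key
  rw [hr'val]
  have hne1 : (inr (e, t) : V ⊕ (G.edgeSet × Fin q)) ≠ inr (f, st) :=
    fun h => hw (Sum.inr_injective h)
  have hne2 : (inr (f, st) : V ⊕ (G.edgeSet × Fin q)) ≠ inr (e, t) :=
    fun h => hw (Sum.inr_injective h).symm
  have hφ'e : φ' (inr (e, t)) = (x a + x b) / 2 + 1 / 2 := by
    simp only [hφ', phiA, phiB, Sum.elim_inr]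
    rw [F3 G hab.ne he]
    simp only [if_true, if_neg hne1]
    ring
  have hφ'f : φ' (inr (f, st)) = (x c + x d) / 2 - 1 / 2 := by
    simp only [hφ', phiA, phiB, Sum.elim_inr]
    rw [F3 G hcd.ne hf]
    simp only [if_true, if_neg hne2]
    ring
  rw [hφ'e, hφ'f]
  -- sums in terms of r
  have hcross : ∑ i, ∑ j, ii G e i * ii G f j * r i j
      = (r a c + r a d) + (r b c + r b d) := by
    have hinner : ∀ i, ∑ j, ii G e i * ii G f j * r i j = ii G e i * (r i c + r i d) := by
      intro i
      rw [← F3 G hcd.ne hf (fun j => r i j), Finset.mul_sum]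
      exact Finset.sum_congr rfl fun j _ => by ring
    rw [Finset.sum_congr rfl fun i _ => hinner i]
    exact F3 G hab.ne he _
  have hee : ∑ i, ∑ j, ii G e i * ii G e j * r i j = (r a a + r a b) + (r b a + r b b) := by
    have hinner : ∀ i, ∑ j, ii G e i * ii G e j * r i j = ii G e i * (r i a + r i b) := by
      intro i
      rw [← F3 G hab.ne he (fun j => r i j), Finset.mul_sum]
      exact Finset.sum_congr rfl fun j _ => by ring
    rw [Finset.sum_congr rfl fun i _ => hinner i]
    exact F3 G hab.ne he _
  have hff : ∑ i, ∑ j, ii G f i * ii G f j * r i j = (r c c + r c d) + (r d c + r d d) := by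
    have hinner : ∀ i, ∑ j, ii G f i * ii G f j * r i j = ii G f i * (r i c + r i d) := by
      intro i
      rw [← F3 G hcd.ne hf (fun j => r i j), Finset.mul_sum]
      exact Finset.sum_congr rfl fun j _ => by ring
    rw [Finset.sum_congr rfl fun i _ => hinner i]
    exact F3 G hcd.ne hf _
  rw [hcross, hee, hff]
  have K1 : φ1 b - φ1 d = (r a d + r c b - r a b - r c d) / 2 := keylem hconn hr hφ1 b d
  have K2 : φ2 b - φ2 c = (r a c + r d b - r a b - r d c) / 2 := keylem hconn hr hφ2 b c
  have K3 : φ3 a - φ3 d = (r b d + r c a - r b a - r c d) / 2 := keylem hconn hr hφ3 a d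
  have K4 : φ4 a - φ4 c = (r b c + r d a - r b a - r d c) / 2 := keylem hconn hr hφ4 a c
  have s1 : r c b = r b c := (effres_symm hconn hr b c).symm
  have s2 : r d b = r b d := (effres_symm hconn hr b d).symm
  have s3 : r c a = r a c := (effres_symm hconn hr a c).symm
  have s4 : r d a = r a d := (effres_symm hconn hr a d).symm
  have s5 : r b a = r a b := (effres_symm hconn hr a b).symm
  have s6 : r d c = r c d := (effres_symm hconn hr c d).symm
  have s7 : r a a = 0 := effres_diag hr a
  have s8 : r b b = 0 := effres_diag hr b
  have s9 : r c c = 0 := effres_diag hr c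
  have s10 : r d d = 0 := effres_diag hr d
  have hB : (φ1 a + φ2 a + φ3 a + φ4 a) + (φ1 b + φ2 b + φ3 b + φ4 b)
      - (φ1 c + φ2 c + φ3 c + φ4 c) - (φ1 d + φ2 d + φ3 d + φ4 d)
      = 2 * (r a c + r a d + r b c + r b d) - 2 * r a b - 2 * r c d := by
    linarith [hval1, hval2, hval3, hval4, K1, K2, K3, K4, s1, s2, s3, s4, s5, s6]
  have ea : x a = (φ1 a + φ2 a + φ3 a + φ4 a) / (2 * (q : ℝ)) := rfl
  have eb : x b = (φ1 b + φ2 b + φ3 b + φ4 b) / (2 * (q : ℝ)) := rfl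
  have ec : x c = (φ1 c + φ2 c + φ3 c + φ4 c) / (2 * (q : ℝ)) := rfl
  have ed : x d = (φ1 d + φ2 d + φ3 d + φ4 d) / (2 * (q : ℝ)) := rfl
  have hmain : (x a + x b) / 2 + 1 / 2 - ((x c + x d) / 2 - 1 / 2)
      = 1 + ((φ1 a + φ2 a + φ3 a + φ4 a) + (φ1 b + φ2 b + φ3 b + φ4 b)
        - (φ1 c + φ2 c + φ3 c + φ4 c) - (φ1 d + φ2 d + φ3 d + φ4 d)) / (4 * (q : ℝ)) := by
    rw [ea, eb, ec, ed]
    field_simp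
    ring
  rw [hmain, hB, s5, s6, s7, s8, s9, s10]
  field_simp
  ring


/-- Foster's theorem: the sum of effective resistances over all edges is `n - 1`. -/
lemma foster (hconn : G.Connected) (hr : IsEffRes G r) :
    ∑ i, ∑ j, (if G.Adj i j then r i j else 0) = 2 * ((Fintype.card V : ℝ) - 1) := by
  obtain ⟨v0⟩ := hconn.nonempty
  choose ψ hψ hval using fun i => hr i v0
  have hrij : ∀ i j, r i j = ψ i i - ψ j i - ψ i j + ψ j j := by
    intro i j
    have h : G.lapMatrix ℝ *ᵥ (ψ i - ψ j) = dlt i j := by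
      rw [Matrix.mulVec_sub, hψ, hψ]
      funext k; simp only [dlt, Pi.sub_apply]; ring
    have := effres_eq hconn hr h
    simp only [Pi.sub_apply] at this
    rw [this]; ring
  have hsplit : ∀ i j, (if G.Adj i j then r i j else 0)
      = (if G.Adj i j then (ψ i i - ψ i j) else 0)
        + (if G.Adj i j then (ψ j j - ψ j i) else 0) := by
    intro i j
    by_cases h : G.Adj i j <;> simp [h]
    rw [hrij i j]; ring
  simp only [hsplit, Finset.sum_add_distrib]
  have hswap : ∑ i, ∑ j, (if G.Adj i j then (ψ j j - ψ j i) else 0)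
      = ∑ i, ∑ j, (if G.Adj i j then (ψ i i - ψ i j) else 0) := by
    rw [Finset.sum_comm]
    refine Finset.sum_congr rfl fun i _ => Finset.sum_congr rfl fun j _ => ?_
    rw [if_congr (G.adj_comm j i) rfl rfl]
  rw [hswap]
  have hrow : ∀ i, ∑ j, (if G.Adj i j then (ψ i i - ψ i j) else 0)
      = 1 - (if i = v0 then 1 else 0) := by
    intro i
    have h1 : ∑ j, (if G.Adj i j then (ψ i i - ψ i j) else 0)
        = (G.degree i : ℝ) * ψ i i - ∑ j ∈ G.neighborFinset i, ψ i j := by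
      have hterm : ∀ j, (if G.Adj i j then (ψ i i - ψ i j) else 0)
          = (if G.Adj i j then ψ i i else 0) - (if G.Adj i j then ψ i j else 0) := by
        intro j; split_ifs <;> ring
      rw [Finset.sum_congr rfl fun j _ => hterm j, Finset.sum_sub_distrib]
      congr 1
      · rw [← Finset.sum_filter, Finset.sum_const, nsmul_eq_mul]
        norm_cast
        rw [SimpleGraph.degree, SimpleGraph.neighborFinset_eq_filter]
      · rw [SimpleGraph.neighborFinset_eq_filter, Finset.sum_filter]
    rw [h1, ← SimpleGraph.lapMatrix_mulVec_apply, hψ]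
    simp
  rw [Finset.sum_congr rfl fun i _ => hrow i, Finset.sum_sub_distrib,
    Finset.sum_const, Finset.sum_ite_eq', nsmul_eq_mul, mul_one]
  simp [Finset.card_univ]
  ring

end rformulas

/-- `K(S_q(G)) = (2/q) K(G) + K̄(G) + (q/2) K̃(G) + (m²q² - n(n-1))/2`. -/
theorem stmt18 [Fintype V] [DecidableEq V] (G : SimpleGraph V) [DecidableRel G.Adj]
    (hconn : G.Connected) (q : ℕ) (hq : 0 < q)
    (r : V → V → ℝ) (r' : (V ⊕ (G.edgeSet × Fin q)) → (V ⊕ (G.edgeSet × Fin q)) → ℝ)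
    (hr : IsEffRes G r) (hr' : IsEffRes (qSubdivision G q) r') :
    kirchhoff r' =
      2 / (q : ℝ) * kirchhoff r + addKirchhoff G r + (q : ℝ) / 2 * mulKirchhoff G r +
        ((G.edgeFinset.card : ℝ) ^ 2 * (q : ℝ) ^ 2 -
          (Fintype.card V : ℝ) * ((Fintype.card V : ℝ) - 1)) / 2 := by
  
  classical
  have hq0 : (q : ℝ) ≠ 0 := Nat.cast_ne_zero.mpr hq.ne'
  have hconn' : (qSubdivision G q).Connected := qsub_connected G q hconn hq
  set n : ℝ := (Fintype.card V : ℝ) with hn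
  set M : ℝ := (Fintype.card G.edgeSet : ℝ) with hM
  have hm : (G.edgeFinset.card : ℝ) = M := by
    rw [SimpleGraph.edgeFinset, Set.toFinset_card]
  -- key scalar sums
  set Srr : ℝ := ∑ i, ∑ j, r i j with hSrr
  set Sdr : ℝ := ∑ i, ∑ j, (G.degree j : ℝ) * r i j with hSdr
  set Sddr : ℝ := ∑ i, ∑ j, (G.degree i : ℝ) * (G.degree j : ℝ) * r i j with hSddr
  -- Foster
  have hRA : ∑ i, ∑ j, (if G.Adj i j then r i j else 0) = 2 * (n - 1) :=
    foster hconn hr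
  -- edge-wise double sums
  have hE2 : ∑ e : G.edgeSet, ∑ i, ∑ j, ii G e i * ii G e j * r i j
      = 2 * (n - 1) := by
    rw [← hRA, Finset.sum_comm]
    refine Finset.sum_congr rfl fun i _ => ?_
    rw [Finset.sum_comm]
    refine Finset.sum_congr rfl fun j _ => ?_
    rw [← Finset.sum_mul, F2]
    by_cases h : i = j
    · subst h
      rw [if_pos rfl, effres_diag hr i, if_neg (G.irrefl)]
      ring
    · rw [if_neg h]
      split_ifs <;> ring
  have hA : ∀ u, ∑ e : G.edgeSet, ∑ i, ii G e i * r u i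
      = ∑ i, (G.degree i : ℝ) * r u i := by
    intro u
    rw [Finset.sum_comm]
    refine Finset.sum_congr rfl fun i _ => ?_
    rw [← Finset.sum_mul, F1]
  have hDD : ∑ e : G.edgeSet, ∑ f : G.edgeSet, ∑ i, ∑ j, ii G e i * ii G f j * r i j
      = Sddr := by
    have h1 : ∀ (e : G.edgeSet) i j, ∑ f : G.edgeSet, ii G e i * ii G f j * r i j
        = ii G e i * ((G.degree j : ℝ) * r i j) := by
      intro e i j
      have : ∀ f : G.edgeSet, ii G e i * ii G f j * r i j
          = ii G f j * (ii G e i * r i j) := fun f => by ring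
      rw [Finset.sum_congr rfl fun f _ => this f, ← Finset.sum_mul, F1]
      ring
    have h2 : ∀ e : G.edgeSet, ∑ f : G.edgeSet, ∑ i, ∑ j, ii G e i * ii G f j * r i j
        = ∑ i, ∑ j, ii G e i * ((G.degree j : ℝ) * r i j) := by
      intro e
      rw [Finset.sum_comm]
      refine Finset.sum_congr rfl fun i _ => ?_
      rw [Finset.sum_comm]
      exact Finset.sum_congr rfl fun j _ => h1 e i j
    have h3 : ∀ i, ∑ e : G.edgeSet, ∑ j, ii G e i * ((G.degree j : ℝ) * r i j)
        = ∑ j, (G.degree i : ℝ) * (G.degree j : ℝ) * r i j := by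
      intro i
      rw [Finset.sum_comm]
      refine Finset.sum_congr rfl fun j _ => ?_
      rw [← Finset.sum_mul, F1]
      ring
    calc ∑ e : G.edgeSet, ∑ f : G.edgeSet, ∑ i, ∑ j, ii G e i * ii G f j * r i j
        = ∑ e : G.edgeSet, ∑ i, ∑ j, ii G e i * ((G.degree j : ℝ) * r i j) :=
          Finset.sum_congr rfl fun e _ => h2 e
      _ = ∑ i, ∑ e : G.edgeSet, ∑ j, ii G e i * ((G.degree j : ℝ) * r i j) :=
          Finset.sum_comm
      _ = ∑ i, ∑ j, (G.degree i : ℝ) * (G.degree j : ℝ) * r i j :=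
          Finset.sum_congr rfl fun i _ => h3 i
      _ = Sddr := hSddr.symm
  -- block S1
  have hS1 : ∑ u, ∑ v, r' (inl u) (inl v) = 2 / (q : ℝ) * Srr := by
    rw [hSrr, Finset.mul_sum]
    refine Finset.sum_congr rfl fun u _ => ?_
    rw [Finset.mul_sum]
    exact Finset.sum_congr rfl fun v _ => R1 hconn hq hr hr' u v
  -- block S2 rows
  have hrow2 : ∀ u, ∑ p : G.edgeSet × Fin q, r' (inl u) (inr p)
      = (q : ℝ) * M / 2 + (∑ i, (G.degree i : ℝ) * r u i) - (n - 1) / 2 := by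
    intro u
    rw [Fintype.sum_prod_type]
    have hinner : ∀ e : G.edgeSet, ∑ t : Fin q, r' (inl u) (inr (e, t))
        = (q : ℝ) * (1 / 2) + (∑ i, ii G e i * r u i)
          - (∑ i, ∑ j, ii G e i * ii G e j * r i j) / 4 := by
      intro e
      have : ∀ t : Fin q, r' (inl u) (inr (e, t))
          = 1 / 2 + (∑ i, ii G e i * r u i) / (q : ℝ)
            - (∑ i, ∑ j, ii G e i * ii G e j * r i j) / (4 * (q : ℝ)) :=
        fun t => R2 hconn hq hr hr' u e t
      rw [Finset.sum_congr rfl fun t _ => this t, Finset.sum_const, Finset.card_univ,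
        Fintype.card_fin, nsmul_eq_mul]
      field_simp
      try ring
    rw [Finset.sum_congr rfl fun e _ => hinner e]
    rw [Finset.sum_sub_distrib, Finset.sum_add_distrib, Finset.sum_const, Finset.card_univ,
      nsmul_eq_mul, hA u, ← Finset.sum_div, hE2]
    rw [hM]
    ring
  have hS2 : ∑ u, ∑ p : G.edgeSet × Fin q, r' (inl u) (inr p)
      = n * ((q : ℝ) * M / 2) + Sdr - n * ((n - 1) / 2) := by
    rw [Finset.sum_congr rfl fun u _ => hrow2 u, Finset.sum_sub_distrib,
      Finset.sum_add_distrib, Finset.sum_const, Finset.card_univ, nsmul_eq_mul,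
      Finset.sum_const, Finset.card_univ, nsmul_eq_mul]
  -- block S3 = S2 by symmetry
  have hS3 : ∑ p : G.edgeSet × Fin q, ∑ u, r' (inr p) (inl u)
      = ∑ u, ∑ p : G.edgeSet × Fin q, r' (inl u) (inr p) := by
    rw [Finset.sum_comm]
    exact Finset.sum_congr rfl fun u _ => Finset.sum_congr rfl fun p _ =>
      (effres_symm hconn' hr' (inl u) (inr p)).symm
  -- block S4
  set g : (G.edgeSet × Fin q) → (G.edgeSet × Fin q) → ℝ := fun p p' =>
    1 + (∑ i, ∑ j, ii G p.1 i * ii G p'.1 j * r i j) / (2 * (q : ℝ))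
      - (∑ i, ∑ j, ii G p.1 i * ii G p.1 j * r i j) / (4 * (q : ℝ))
      - (∑ i, ∑ j, ii G p'.1 i * ii G p'.1 j * r i j) / (4 * (q : ℝ)) with hg
  have hpt : ∀ p p' : G.edgeSet × Fin q, r' (inr p) (inr p')
      = g p p' - (if p' = p then 1 else 0) := by
    intro p p'
    by_cases h : p' = p
    · subst h
      rw [if_pos rfl, effres_diag hr' (inr p')]
      rw [hg]
      field_simp
      ring
    · rw [if_neg h]
      have := R3 hconn hq hr hr' p.1 p'.1 p.2 p'.2 (by
        intro hcon
        exact h (by rw [← Prod.mk.eta (p := p'), ← Prod.mk.eta (p := p), hcon]))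
      rw [Prod.mk.eta, Prod.mk.eta] at this
      rw [this, hg]
      ring
  have hS4 : ∑ p : G.edgeSet × Fin q, ∑ p' : G.edgeSet × Fin q, r' (inr p) (inr p')
      = (M * (q : ℝ)) ^ 2 + (q : ℝ) * Sddr / 2 - M * (q : ℝ) * (n - 1) - M * (q : ℝ) := by
    rw [Finset.sum_congr rfl fun p _ => Finset.sum_congr rfl fun p' _ => hpt p p']
    have hcard : ((Fintype.card (G.edgeSet × Fin q) : ℝ)) = M * (q : ℝ) := by
      rw [Fintype.card_prod, Fintype.card_fin]
      push_cast
      ring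
    have hsum_g : ∑ p : G.edgeSet × Fin q, ∑ p' : G.edgeSet × Fin q, g p p'
        = (M * (q : ℝ)) ^ 2 + (q : ℝ) * Sddr / 2 - M * (q : ℝ) * (n - 1) := by
      have hexp : ∀ p p' : G.edgeSet × Fin q, g p p'
          = 1 + (∑ i, ∑ j, ii G p.1 i * ii G p'.1 j * r i j) / (2 * (q : ℝ))
            - (∑ i, ∑ j, ii G p.1 i * ii G p.1 j * r i j) / (4 * (q : ℝ))
            - (∑ i, ∑ j, ii G p'.1 i * ii G p'.1 j * r i j) / (4 * (q : ℝ)) := fun p p' => rfl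
      have hones : ∑ _p : G.edgeSet × Fin q, ∑ _p' : G.edgeSet × Fin q, (1 : ℝ)
          = (M * (q : ℝ)) ^ 2 := by
        simp only [Finset.sum_const, Finset.card_univ, nsmul_eq_mul, mul_one]
        rw [hcard]
        ring
      have hc1 : ∑ p : G.edgeSet × Fin q, ∑ p' : G.edgeSet × Fin q,
          (∑ i, ∑ j, ii G p.1 i * ii G p'.1 j * r i j)
          = (q : ℝ) ^ 2 * Sddr := by
        rw [Fintype.sum_prod_type]
        have : ∀ e : G.edgeSet, ∀ t : Fin q, ∑ p' : G.edgeSet × Fin q,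
            (∑ i, ∑ j, ii G e i * ii G p'.1 j * r i j)
            = (q : ℝ) * ∑ f : G.edgeSet, ∑ i, ∑ j, ii G e i * ii G f j * r i j := by
          intro e t
          rw [Fintype.sum_prod_type, Finset.mul_sum]
          refine Finset.sum_congr rfl fun f _ => ?_
          show (∑ _t : Fin q, ∑ i, ∑ j, ii G e i * ii G f j * r i j) = _
          rw [Finset.sum_const, Finset.card_univ, Fintype.card_fin, nsmul_eq_mul]
        have h2 : ∀ e : G.edgeSet, ∑ t : Fin q, ∑ p' : G.edgeSet × Fin q,
            (∑ i, ∑ j, ii G e i * ii G p'.1 j * r i j)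
            = (q : ℝ) * ((q : ℝ) * ∑ f : G.edgeSet, ∑ i, ∑ j, ii G e i * ii G f j * r i j) := by
          intro e
          rw [Finset.sum_congr rfl fun t _ => this e t, Finset.sum_const, Finset.card_univ,
            Fintype.card_fin, nsmul_eq_mul]
        rw [Finset.sum_congr rfl fun e _ => h2 e, ← Finset.mul_sum, ← Finset.mul_sum, hDD]
        ring
      have hc2 : ∑ p : G.edgeSet × Fin q, ∑ p' : G.edgeSet × Fin q,
          (∑ i, ∑ j, ii G p.1 i * ii G p.1 j * r i j)
          = M * (q : ℝ) ^ 2 * (2 * (n - 1)) := by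
        have : ∀ p : G.edgeSet × Fin q, ∑ p' : G.edgeSet × Fin q,
            (∑ i, ∑ j, ii G p.1 i * ii G p.1 j * r i j)
            = M * (q : ℝ) * (∑ i, ∑ j, ii G p.1 i * ii G p.1 j * r i j) := by
          intro p
          rw [Finset.sum_const, Finset.card_univ, nsmul_eq_mul, hcard]
        rw [Finset.sum_congr rfl fun p _ => this p, ← Finset.mul_sum, Fintype.sum_prod_type]
        have h2 : ∀ e : G.edgeSet, ∑ t : Fin q, (∑ i, ∑ j, ii G e i * ii G e j * r i j)
            = (q : ℝ) * (∑ i, ∑ j, ii G e i * ii G e j * r i j) := by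
          intro e
          rw [Finset.sum_const, Finset.card_univ, Fintype.card_fin, nsmul_eq_mul]
        rw [Finset.sum_congr rfl fun e _ => h2 e, ← Finset.mul_sum, hE2]
        ring
      have hc3 : ∑ p : G.edgeSet × Fin q, ∑ p' : G.edgeSet × Fin q,
          (∑ i, ∑ j, ii G p'.1 i * ii G p'.1 j * r i j)
          = M * (q : ℝ) ^ 2 * (2 * (n - 1)) := by
        have hinner : ∑ p' : G.edgeSet × Fin q, (∑ i, ∑ j, ii G p'.1 i * ii G p'.1 j * r i j)
            = (q : ℝ) * (2 * (n - 1)) := by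
          rw [Fintype.sum_prod_type]
          have h2 : ∀ e : G.edgeSet, ∑ _t : Fin q, (∑ i, ∑ j, ii G e i * ii G e j * r i j)
              = (q : ℝ) * (∑ i, ∑ j, ii G e i * ii G e j * r i j) := by
            intro e
            rw [Finset.sum_const, Finset.card_univ, Fintype.card_fin, nsmul_eq_mul]
          rw [Finset.sum_congr rfl fun e _ => h2 e, ← Finset.mul_sum, hE2]
        rw [Finset.sum_congr rfl fun p _ => hinner, Finset.sum_const, Finset.card_univ,
          nsmul_eq_mul, hcard]
        ring
      calc ∑ p : G.edgeSet × Fin q, ∑ p' : G.edgeSet × Fin q, g p p'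
          = (∑ _p : G.edgeSet × Fin q, ∑ _p' : G.edgeSet × Fin q, (1 : ℝ))
            + (∑ p : G.edgeSet × Fin q, ∑ p' : G.edgeSet × Fin q,
                (∑ i, ∑ j, ii G p.1 i * ii G p'.1 j * r i j)) / (2 * (q : ℝ))
            - (∑ p : G.edgeSet × Fin q, ∑ p' : G.edgeSet × Fin q,
                (∑ i, ∑ j, ii G p.1 i * ii G p.1 j * r i j)) / (4 * (q : ℝ))
            - (∑ p : G.edgeSet × Fin q, ∑ p' : G.edgeSet × Fin q,
                (∑ i, ∑ j, ii G p'.1 i * ii G p'.1 j * r i j)) / (4 * (q : ℝ)) := by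
            simp only [hexp, Finset.sum_add_distrib, Finset.sum_sub_distrib, Finset.sum_div]
        _ = (M * (q : ℝ)) ^ 2 + (q : ℝ) * Sddr / 2 - M * (q : ℝ) * (n - 1) := by
            rw [hones, hc1, hc2, hc3]
            field_simp
            ring
    simp only [Finset.sum_sub_distrib]
    rw [hsum_g]
    have hite : ∑ _p : G.edgeSet × Fin q, ∑ p' : G.edgeSet × Fin q,
        (if p' = _p then (1 : ℝ) else 0) = M * (q : ℝ) := by
      have h1 : ∀ p : G.edgeSet × Fin q, ∑ p' : G.edgeSet × Fin q,
          (if p' = p then (1 : ℝ) else 0) = 1 := by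
        intro p
        rw [Finset.sum_ite_eq']
        simp
      rw [Finset.sum_congr rfl fun p _ => h1 p, Finset.sum_const, Finset.card_univ,
        nsmul_eq_mul, hcard, mul_one]
    try rw [hite]
    try ring
  -- put the four blocks together
  have htotal : ∑ z, ∑ z', r' z z'
      = (∑ u, ∑ v, r' (inl u) (inl v))
        + (∑ u, ∑ p : G.edgeSet × Fin q, r' (inl u) (inr p))
        + ((∑ p : G.edgeSet × Fin q, ∑ u, r' (inr p) (inl u))
          + ∑ p : G.edgeSet × Fin q, ∑ p' : G.edgeSet × Fin q, r' (inr p) (inr p')) := by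
    rw [Fintype.sum_sum_type]
    congr 1
    · rw [← Finset.sum_add_distrib]
      exact Finset.sum_congr rfl fun u _ => by rw [Fintype.sum_sum_type]
    · rw [← Finset.sum_add_distrib]
      exact Finset.sum_congr rfl fun p _ => by rw [Fintype.sum_sum_type]
  have hdd' : ∑ i, ∑ j, (G.degree i : ℝ) * r i j = Sdr := by
    rw [hSdr]
    rw [Finset.sum_comm]
    refine Finset.sum_congr rfl fun a _ => Finset.sum_congr rfl fun b _ => ?_
    rw [effres_symm hconn hr b a]
  have haddsum : ∑ i, ∑ j, ((G.degree i : ℝ) + (G.degree j : ℝ)) * r i j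
      = Sdr + Sdr := by
    have : ∀ i j, ((G.degree i : ℝ) + (G.degree j : ℝ)) * r i j
        = (G.degree i : ℝ) * r i j + (G.degree j : ℝ) * r i j := fun i j => by ring
    simp only [this, Finset.sum_add_distrib]
    rw [hdd', ← hSdr]
  simp only [kirchhoff, addKirchhoff, mulKirchhoff]
  rw [htotal, hS1, hS3, hS2, hS4, hm, haddsum, ← hSrr, ← hSddr]
  field_simp
  ring
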